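/- arXiv:1911.03152 — 3 statements merged into one kernel-verified Lean document; each statement's English description precedes it below -/
import Mathlib

section
/- Let B₁ be the open unit ball of ℝ², let λ < 0 and set δ := 1 + (4 + 2√(4 − 2λ))/(−λ). Then the function u(x) := log( 8δ / (−λ (δ − |x|²)²) ) is twice continuously differentiable on a neighborhood of the closed unit ball, satisfies −Δu(x) = λ e^{u(x)} and u(x) < 0 for every x ∈ B₁, and u(x) = 0 for every x with |x| = 1. Moreover, u(x) + log(−λ) → log( 8/(1 − |x|²)² ) as λ → −∞, uniformly on every compact subset of B₁. -/
open Set MeasureTheory Filter Topology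

/-- The Laplacian of `u` at `x`: the trace of the Hessian of `u`. -/
noncomputable def laplacian {N : ℕ} (u : EuclideanSpace ℝ (Fin N) → ℝ)
    (x : EuclideanSpace ℝ (Fin N)) : ℝ :=
  ∑ i : Fin N, iteratedFDeriv ℝ 2 u x ![EuclideanSpace.single i 1, EuclideanSpace.single i 1]

/-- A classical solution of the problem `(P_f^λ)` on `Ω`:
`u` is continuous on the closure of `Ω`, twice continuously differentiable on `Ω`,
satisfies `-Δ u = λ f(u)` in `Ω` and `u = 0` on `∂ Ω`. -/
def IsClassicalSolution {N : ℕ} (Ω : Set (EuclideanSpace ℝ (Fin N))) (lam : ℝ)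
    (f : ℝ → ℝ) (u : EuclideanSpace ℝ (Fin N) → ℝ) : Prop :=
  ContinuousOn u (closure Ω) ∧ ContDiffOn ℝ 2 u Ω ∧
    (∀ x ∈ Ω, -laplacian u x = lam * f (u x)) ∧
    (∀ x ∈ frontier Ω, u x = 0)

/-- Condition (1.2): `f` is continuous, non-decreasing, non-negative and `f 0 > 0`. -/
def Cond12 (f : ℝ → ℝ) : Prop :=
  Continuous f ∧ Monotone f ∧ (∀ t, 0 ≤ f t) ∧ 0 < f 0

namespace Stmt17Aux

notation "E2" => EuclideanSpace ℝ (Fin 2)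

theorem my_iterCongr {f g : E2 → ℝ} {x : E2} (h : f =ᶠ[𝓝 x] g) (n : ℕ) :
    iteratedFDeriv ℝ n f x = iteratedFDeriv ℝ n g x := by
  simp only [← iteratedFDerivWithin_univ]
  apply Filter.EventuallyEq.iteratedFDerivWithin_eq _ h.self_of_nhds
  rwa [nhdsWithin_univ]

noncomputable def Tmap : E2 →L[ℝ] (E2 →L[ℝ] ℝ) :=
  LinearMap.toContinuousLinearMap
  { toFun := fun y => innerSL ℝ y
    map_add' := fun y z => by ext v; simp [inner_add_left]
    map_smul' := fun c y => by ext v; simp [inner_smul_left] }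

lemma Tmap_apply (y v : E2) : Tmap y v = inner ℝ y v := rfl

section deriv
variable (d C : ℝ)

noncomputable def gfun : E2 → ℝ := fun y => C - 2 * Real.log (d - ‖y‖^2)

noncomputable def Ffun : E2 → (E2 →L[ℝ] ℝ) := fun y => (4 / (d - ‖y‖^2)) • innerSL ℝ y

lemma gfun_hasFDerivAt {y : E2} (hy : ‖y‖^2 < d) :
    HasFDerivAt (gfun d C) (Ffun d y) y := by
  have ht : d - ‖y‖^2 ≠ 0 := by nlinarith
  have h1 : HasFDerivAt (fun y : E2 => ‖y‖^2) (2 • (innerSL ℝ y)) y :=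
    (hasStrictFDerivAt_norm_sq y).hasFDerivAt
  have h2 : HasFDerivAt (fun y : E2 => d - ‖y‖^2) (-(2 • (innerSL ℝ y))) y :=
    h1.const_sub d
  have h3 := (h2.log ht).const_mul (2:ℝ)
  have h4 := h3.const_sub C
  refine h4.congr_fderiv ?_
  ext v
  simp [Ffun, ContinuousLinearMap.smul_apply, smul_smul]
  field_simp
  ring

lemma Ffun_hasFDerivAt {x : E2} (hx : ‖x‖^2 < d) :
    HasFDerivAt (Ffun d)
      ((4 / (d - ‖x‖^2)) • Tmap + (((8 / (d - ‖x‖^2)^2) • innerSL ℝ x).smulRight (innerSL ℝ x))) x := by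
  have ht : d - ‖x‖^2 ≠ 0 := by nlinarith
  have h1 : HasFDerivAt (fun y : E2 => ‖y‖^2) (2 • (innerSL ℝ x)) x :=
    (hasStrictFDerivAt_norm_sq x).hasFDerivAt
  have h2 : HasFDerivAt (fun y : E2 => d - ‖y‖^2) (-(2 • (innerSL ℝ x))) x :=
    h1.const_sub d
  have hinv := (hasFDerivAt_inv ht).comp x h2
  have h3 := hinv.const_mul (4:ℝ)
  have hT : HasFDerivAt (fun y : E2 => Tmap y) Tmap x := Tmap.hasFDerivAt
  have h4 := h3.smul hT
  have he : Ffun d = fun y : E2 => (4 * (d - ‖y‖^2)⁻¹) • Tmap y := by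
    funext y; ext v
    simp [Ffun, Tmap_apply, div_eq_mul_inv]
  rw [he]
  refine h4.congr_fderiv ?_
  ext v w
  simp [Tmap_apply, ContinuousLinearMap.smul_apply, ContinuousLinearMap.smulRight_apply,
    ContinuousLinearMap.add_apply]
  field_simp
  ring

lemma gfun_second {x : E2} (hx : ‖x‖^2 < d) (v : E2) :
    iteratedFDeriv ℝ 2 (gfun d C) x ![v, v]
      = 8 * (inner ℝ x v : ℝ)^2 / (d - ‖x‖^2)^2 + 4 * (inner ℝ v v : ℝ) / (d - ‖x‖^2) := by
  have ht : d - ‖x‖^2 ≠ 0 := by nlinarith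
  have hU : IsOpen {y : E2 | ‖y‖^2 < d} :=
    isOpen_lt (by continuity) continuous_const
  have hmem : {y : E2 | ‖y‖^2 < d} ∈ 𝓝 x := hU.mem_nhds hx
  have hev : fderiv ℝ (gfun d C) =ᶠ[𝓝 x] Ffun d := by
    filter_upwards [hmem] with y hy
    exact (gfun_hasFDerivAt d C hy).fderiv
  rw [iteratedFDeriv_two_apply, hev.fderiv_eq, (Ffun_hasFDerivAt d hx).fderiv]
  show (_ : ℝ) = _
  simp [Tmap_apply, ContinuousLinearMap.smul_apply, ContinuousLinearMap.smulRight_apply,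
    ContinuousLinearMap.add_apply, Matrix.cons_val_zero, Matrix.cons_val_one]
  field_simp
  ring

end deriv

lemma norm_sq_eq_sum (x : E2) : ‖x‖^2 = ∑ i, (x i)^2 := by
  rw [EuclideanSpace.norm_eq, Real.sq_sqrt (by positivity)]
  simp [Real.norm_eq_abs, sq_abs]

lemma gfun_laplacian (d C : ℝ) {x : E2} (hx : ‖x‖^2 < d) :
    laplacian (gfun d C) x = 8 * d / (d - ‖x‖^2)^2 := by
  have ht : d - ‖x‖^2 ≠ 0 := by nlinarith
  unfold laplacian
  have : ∀ i : Fin 2, iteratedFDeriv ℝ 2 (gfun d C) x ![EuclideanSpace.single i 1, EuclideanSpace.single i 1]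
      = 8 * (x i)^2 / (d - ‖x‖^2)^2 + 4 / (d - ‖x‖^2) := by
    intro i
    rw [gfun_second d C hx]
    have h1 : (inner ℝ x (EuclideanSpace.single i (1:ℝ)) : ℝ) = x i := by
      simp [EuclideanSpace.inner_single_right]
    have h2 : (inner ℝ (EuclideanSpace.single i (1:ℝ)) (EuclideanSpace.single i (1:ℝ)) : ℝ) = 1 := by
      simp [EuclideanSpace.inner_single_right]
    rw [h1, h2]
    ring
  simp only [this]
  have hsum : ‖x‖^2 = (x 0)^2 + (x 1)^2 := by
    rw [norm_sq_eq_sum, Fin.sum_univ_two]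
  have key : 8 * (x 0)^2/(d-‖x‖^2)^2 + 4/(d-‖x‖^2) + (8*(x 1)^2/(d-‖x‖^2)^2 + 4/(d-‖x‖^2))
      = (8*((x 0)^2+(x 1)^2) + 8*(d-‖x‖^2))/(d-‖x‖^2)^2 := by
    field_simp
    ring
  rw [Fin.sum_univ_two, key, ← hsum]
  have h8 : 8*‖x‖^2 + 8*(d-‖x‖^2) = 8*d := by ring
  rw [h8]

lemma delta_facts {lam : ℝ} (h : lam < 0) {δv : ℝ}
    (hδv : δv = 1 + (4 + 2 * Real.sqrt (4 - 2*lam)) / (-lam)) :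
    1 < δv ∧ 8 * δv = -lam * (δv - 1)^2 := by
  have hl : 0 < -lam := by linarith
  set s := Real.sqrt (4 - 2*lam) with hs
  have hs0 : 0 ≤ s := Real.sqrt_nonneg _
  have hs2 : s^2 = 4 - 2*lam := Real.sq_sqrt (by linarith)
  constructor
  · rw [hδv]
    have : 0 < (4 + 2*s)/(-lam) := by positivity
    linarith
  · have hln : -lam ≠ 0 := ne_of_gt hl
    have hln2 : lam ≠ 0 := by linarith
    have h1 : δv - 1 = (4+2*s)/(-lam) := by rw [hδv]; ring
    have h2 : -lam * (δv-1)^2 = (4+2*s)^2/(-lam) := by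
      rw [h1, div_pow]
      field_simp
    rw [h2, hδv, eq_div_iff hln]
    have hexp : (8 * (1 + (4 + 2 * s) / -lam)) * -lam = 8*(-lam) + 8*(4+2*s) := by
      field_simp
      ring
    rw [hexp]
    linear_combination (-4 : ℝ) * hs2

end Stmt17Aux

set_option maxHeartbeats 2000000 in
open Stmt17Aux in
/-- Example 4.1(i): the explicit solutions of `-Δu = λ e^u` in the unit disk, and their
convergence `u_λ + log(-λ) → log(8/(1-|x|²)²)` locally uniformly as `λ → -∞`. -/
theorem stmt_17 (δ : ℝ → ℝ)
    (hδ : ∀ lam, δ lam = 1 + (4 + 2 * Real.sqrt (4 - 2 * lam)) / (-lam))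
    (u : ℝ → EuclideanSpace ℝ (Fin 2) → ℝ)
    (hu : ∀ lam x, u lam x = Real.log (8 * δ lam / (-lam * (δ lam - ‖x‖^2)^2))) :
    (∀ lam < (0:ℝ),
      (∃ U, IsOpen U ∧ Metric.closedBall (0 : EuclideanSpace ℝ (Fin 2)) 1 ⊆ U ∧
        ContDiffOn ℝ 2 (u lam) U) ∧
      (∀ x ∈ Metric.ball (0 : EuclideanSpace ℝ (Fin 2)) 1,
        -laplacian (u lam) x = lam * Real.exp (u lam x) ∧ u lam x < 0) ∧
      (∀ x : EuclideanSpace ℝ (Fin 2), ‖x‖ = 1 → u lam x = 0)) ∧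
    (∀ K ⊆ Metric.ball (0 : EuclideanSpace ℝ (Fin 2)) 1, IsCompact K →
      TendstoUniformlyOn (fun lam x => u lam x + Real.log (-lam))
        (fun x => Real.log (8 / (1 - ‖x‖^2)^2)) atBot K) := by
  constructor
  · intro lam hlam
    have hl : 0 < -lam := by linarith
    obtain ⟨hd1, hkey⟩ := delta_facts hlam (hδ lam)
    set d := δ lam with hdd
    set C : ℝ := Real.log (8*d/(-lam)) with hC
    have hueq : ∀ x : E2, ‖x‖^2 < d → u lam x = gfun d C x := by
      intro x hx
      have ht : 0 < d - ‖x‖^2 := by linarith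
      rw [hu lam x]
      show _ = C - 2 * Real.log (d - ‖x‖^2)
      have h1 : 8 * d / (-lam * (d - ‖x‖^2)^2) = (8*d/(-lam)) / (d-‖x‖^2)^2 := by
        field_simp
      rw [h1, Real.log_div (by positivity) (by positivity), Real.log_pow]
      push_cast
      ring
    have hU : IsOpen {y : E2 | ‖y‖^2 < d} := isOpen_lt (by continuity) continuous_const
    have hg : ContDiffOn ℝ 2 (gfun d C) {y : E2 | ‖y‖^2 < d} := by
      apply ContDiffOn.sub contDiffOn_const
      apply ContDiffOn.mul contDiffOn_const
      apply ContDiffOn.log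
      · exact (contDiff_const.sub (contDiff_norm_sq ℝ)).contDiffOn
      · intro y hy
        have : ‖y‖^2 < d := hy
        nlinarith
    refine ⟨⟨{y : E2 | ‖y‖^2 < d}, hU, ?_, ?_⟩, ?_, ?_⟩
    · intro x hx
      have : ‖x‖ ≤ 1 := mem_closedBall_zero_iff.1 hx
      have : ‖x‖^2 ≤ 1 := by nlinarith [norm_nonneg x]
      show ‖x‖^2 < d
      linarith
    · exact hg.congr fun y hy => hueq y hy
    · intro x hx
      have hx1 : ‖x‖ < 1 := mem_ball_zero_iff.1 hx
      have hx2 : ‖x‖^2 < 1 := by nlinarith [norm_nonneg x]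
      have hxd : ‖x‖^2 < d := by linarith
      have ht : 0 < d - ‖x‖^2 := by linarith
      have hev : u lam =ᶠ[𝓝 x] gfun d C := by
        filter_upwards [hU.mem_nhds hxd] with y hy using hueq y hy
      have hlap : laplacian (u lam) x = 8 * d / (d - ‖x‖^2)^2 := by
        rw [show laplacian (u lam) x = laplacian (gfun d C) x from
          Finset.sum_congr rfl fun i _ => by rw [my_iterCongr hev]]
        exact gfun_laplacian d C hxd
      have hA : (0:ℝ) < 8 * d / (-lam * (d - ‖x‖^2)^2) := by positivity
      have h5 : d - ‖x‖^2 ≠ 0 := ne_of_gt ht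
      have h6 : lam ≠ 0 := by linarith
      constructor
      · rw [hlap, hu lam x, Real.exp_log hA]
        field_simp
      · rw [hu lam x]
        apply Real.log_neg hA
        rw [div_lt_one (by positivity)]
        have h2 : (d-1)^2 < (d-‖x‖^2)^2 := by nlinarith
        nlinarith
    · intro x hx
      rw [hu lam x, hx]
      have h1 : (1:ℝ)^2 = 1 := one_pow 2
      rw [h1, ← hkey]
      rw [div_self (by positivity)]
      exact Real.log_one
  · intro K hK hKc
    have hδt : Tendsto (fun lam => δ lam - 1) atBot (𝓝 0) := by
      have h1 : Tendsto (fun lam : ℝ => -lam) atBot atTop := tendsto_neg_atBot_atTop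
      have h2 := h1.inv_tendsto_atTop
      have hsq : Tendsto Real.sqrt atTop atTop := by
        apply tendsto_atTop_atTop.2
        intro b
        refine ⟨b^2, fun x hx => ?_⟩
        calc b ≤ |b| := le_abs_self b
          _ = Real.sqrt (b^2) := (Real.sqrt_sq_eq_abs b).symm
          _ ≤ Real.sqrt x := Real.sqrt_le_sqrt hx
      have h3 := (hsq.comp h1).inv_tendsto_atTop
      have hb : Tendsto (fun lam : ℝ => 4 * (-lam)⁻¹ + 4 * (Real.sqrt (-lam))⁻¹) atBot (𝓝 0) := by
        have := (h2.const_mul (4:ℝ)).add (h3.const_mul (4:ℝ))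
        simpa using this
      apply squeeze_zero' _ _ hb
      · filter_upwards [eventually_le_atBot (-2:ℝ)] with lam hlam
        have hl : 0 < -lam := by linarith
        rw [hδ lam]
        have : 0 ≤ (4 + 2 * Real.sqrt (4 - 2*lam)) / (-lam) := by positivity
        linarith
      · filter_upwards [eventually_le_atBot (-2:ℝ)] with lam hlam
        have hl : 0 < -lam := by linarith
        have hsle : Real.sqrt (4 - 2*lam) ≤ 2 * Real.sqrt (-lam) := by
          rw [show (2:ℝ) * Real.sqrt (-lam) = Real.sqrt 4 * Real.sqrt (-lam) by
            rw [show (4:ℝ) = 2^2 by norm_num, Real.sqrt_sq (by norm_num)]]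
          rw [← Real.sqrt_mul (by norm_num)]
          exact Real.sqrt_le_sqrt (by linarith)
        rw [hδ lam]
        have hrs : Real.sqrt (-lam) ^ 2 = -lam := Real.sq_sqrt hl.le
        have hrp : 0 < Real.sqrt (-lam) := Real.sqrt_pos.2 hl
        have h6 : lam ≠ 0 := by linarith
        have h7 : Real.sqrt (-lam) ≠ 0 := ne_of_gt hrp
        have heq : (4 + 4 * Real.sqrt (-lam)) / (-lam) = 4 * (-lam)⁻¹ + 4 * (Real.sqrt (-lam))⁻¹ := by
          field_simp
          nlinarith [hrs]
        calc 1 + (4 + 2 * Real.sqrt (4 - 2*lam)) / (-lam) - 1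
            = (4 + 2 * Real.sqrt (4 - 2*lam)) / (-lam) := by ring
          _ ≤ (4 + 4 * Real.sqrt (-lam)) / (-lam) := by
              exact (div_le_div_iff_of_pos_right hl).2 (by linarith)
          _ = 4 * (-lam)⁻¹ + 4 * (Real.sqrt (-lam))⁻¹ := heq
    rcases K.eq_empty_or_nonempty with rfl | hne
    · exact tendstoUniformlyOn_empty
    obtain ⟨x₀, hx₀, hmax⟩ := hKc.exists_isMaxOn hne continuous_norm.continuousOn
    obtain ⟨ρ, hρdef⟩ : ∃ r : ℝ, r = ‖x₀‖ := ⟨_, rfl⟩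
    have hρ1 : ρ < 1 := by rw [hρdef]; exact mem_ball_zero_iff.1 (hK hx₀)
    have hρ0 : 0 ≤ ρ := by rw [hρdef]; exact norm_nonneg _
    have hρsq : ρ^2 < 1 := by nlinarith
    have hρpos : 0 < 1 - ρ^2 := by linarith
    obtain ⟨C₀, hC₀⟩ : ∃ c : ℝ, c = 1 + 2/(1-ρ^2) := ⟨_, rfl⟩
    have hC₀1 : 1 ≤ C₀ := by
      have h0 : 0 < 2/(1-ρ^2) := by positivity
      rw [hC₀]; linarith
    rw [Metric.tendstoUniformlyOn_iff]
    intro ε hε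
    have h1 : ∀ᶠ lam in atBot, (δ lam - 1) * C₀ < ε := by
      have := hδt.mul_const C₀
      rw [zero_mul] at this
      exact this.eventually_lt_const hε
    filter_upwards [h1, eventually_le_atBot (-1:ℝ)] with lam hlt hlam1
    intro x hxK
    have hlam : lam < 0 := by linarith
    have hl : 0 < -lam := by linarith
    obtain ⟨hd1, hkey⟩ := delta_facts hlam (hδ lam)
    obtain ⟨d, hdd⟩ : ∃ dv : ℝ, dv = δ lam := ⟨_, rfl⟩
    rw [← hdd] at hlt hd1 hkey
    have hr : ‖x‖ ≤ ρ := by rw [hρdef]; exact hmax hxK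
    have hr2 : ‖x‖^2 ≤ ρ^2 := by nlinarith [norm_nonneg x]
    have ht1 : 0 < 1 - ‖x‖^2 := by nlinarith
    have ht : 0 < d - ‖x‖^2 := by nlinarith
    have hflog : u lam x + Real.log (-lam) = Real.log (8*d) - 2 * Real.log (d - ‖x‖^2) := by
      rw [hu lam x, ← hdd]
      rw [Real.log_div (by positivity) (by positivity),
        Real.log_mul (show (-lam) ≠ 0 by positivity)
          (show ((d - ‖x‖^2)^2 : ℝ) ≠ 0 by positivity),
        Real.log_pow]
      push_cast
      ring
    have hglog : Real.log (8 / (1 - ‖x‖^2)^2) = Real.log 8 - 2 * Real.log (1 - ‖x‖^2) := by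
      rw [Real.log_div (by norm_num) (by positivity), Real.log_pow]
      push_cast
      ring
    have hlog8d : Real.log (8*d) = Real.log 8 + Real.log d :=
      Real.log_mul (by norm_num) (by positivity)
    obtain ⟨a, ha'⟩ : ∃ a : ℝ, a = Real.log d := ⟨_, rfl⟩
    obtain ⟨b, hb'⟩ : ∃ b : ℝ, b = Real.log ((d - ‖x‖^2)/(1 - ‖x‖^2)) := ⟨_, rfl⟩
    have hbsplit : Real.log (d - ‖x‖^2) - Real.log (1 - ‖x‖^2) = b := by
      rw [hb', Real.log_div (by positivity) (by positivity)]
    have ha0 : 0 ≤ a := ha' ▸ Real.log_nonneg (by linarith)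
    have hb0 : 0 ≤ b := hb' ▸ Real.log_nonneg (by rw [le_div_iff₀ ht1]; nlinarith)
    have hab : a ≤ d - 1 := by
      have := Real.log_le_sub_one_of_pos (show (0:ℝ) < d by linarith)
      rw [ha']; linarith
    have hbb : b ≤ (d-1)/(1-ρ^2) := by
      have h2 := Real.log_le_sub_one_of_pos (div_pos ht ht1)
      have h3 : (d - ‖x‖^2)/(1 - ‖x‖^2) - 1 = (d-1)/(1 - ‖x‖^2) := by
        rw [div_sub_one (ne_of_gt ht1)]
        congr 1
        ring
      have h4 : (d-1)/(1 - ‖x‖^2) ≤ (d-1)/(1-ρ^2) := by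
        rw [div_le_div_iff₀ ht1 hρpos]
        exact mul_le_mul_of_nonneg_left (by linarith) (by linarith)
      rw [hb']
      calc Real.log ((d - ‖x‖^2)/(1 - ‖x‖^2)) ≤ (d - ‖x‖^2)/(1 - ‖x‖^2) - 1 := h2
        _ = (d-1)/(1 - ‖x‖^2) := h3
        _ ≤ (d-1)/(1-ρ^2) := h4
    have hD : Real.log (8 / (1 - ‖x‖^2)^2) - (u lam x + Real.log (-lam)) = -a + 2*b := by
      rw [hflog, hglog, hlog8d, ← hbsplit, ha']
      ring
    rw [Real.dist_eq, hD]
    have hCpos : 0 < 2/(1-ρ^2) := by positivity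
    have hexp : (d-1)*(1+2/(1-ρ^2)) = (d-1) + 2*((d-1)/(1-ρ^2)) := by ring
    have hM0 : 0 ≤ (d-1)/(1-ρ^2) := div_nonneg (by linarith) (by linarith)
    have habs : |(-a + 2*b)| ≤ (d-1) * C₀ := by
      rw [hC₀, abs_le, hexp]
      constructor
      · linarith
      · linarith
    calc |(-a + 2*b)| ≤ (d-1) * C₀ := habs
      _ < ε := hlt
end

section
/- Let N ≥ 3, let B₁ be the open unit ball of ℝ^N, let λ < 0 and set δ := (N² − 2N − 2λ + √(N(N−2)(N(N−2) − 4λ)))/(−2λ). Then δ > 1 and the function u(x) := ((δ − 1)/(δ − |x|²))^{(N−2)/2} − 1 is twice continuously differentiable on a neighborhood of the closed unit ball, satisfies −1 < u(x) < 0 and −Δu(x) = λ (u(x) + 1)^{(N+2)/(N−2)} for every x ∈ B₁, and u(x) = 0 for every x with |x| = 1. -/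
open Set MeasureTheory Filter Topology

section aux
variable {N : ℕ} (δ c α : ℝ)

/-- first derivative of the radial profile -/
lemma aux_deriv1 {s : ℝ} (h0 : 0 < δ - s) :
    HasDerivAt (fun t : ℝ => c * (δ - t) ^ (-α) - 1) (c * α * (δ - s) ^ (-α - 1)) s := by
  have hb : HasDerivAt (fun t : ℝ => δ - t) (-1) s := (hasDerivAt_id s).const_sub δ
  have h := ((Real.hasDerivAt_rpow_const (p := -α) (Or.inl h0.ne')).comp s hb).const_mul c
  have h2 := h.sub_const 1
  refine h2.congr_deriv ?_
  ring

lemma aux_deriv2 {s : ℝ} (h0 : 0 < δ - s) :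
    HasDerivAt (fun t : ℝ => c * α * (δ - t) ^ (-α - 1))
      (c * α * (α + 1) * (δ - s) ^ (-α - 2)) s := by
  have hb : HasDerivAt (fun t : ℝ => δ - t) (-1) s := (hasDerivAt_id s).const_sub δ
  have h := ((Real.hasDerivAt_rpow_const (p := -α - 1) (Or.inl h0.ne')).comp s hb).const_mul
    (c * α)
  refine h.congr_deriv ?_
  rw [show -α - 1 - 1 = -α - 2 by ring]
  ring

/-- first derivative of the radial function -/
lemma aux_fderiv1 {y : EuclideanSpace ℝ (Fin N)} (hy : ‖y‖ ^ 2 < δ) :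
    HasFDerivAt (fun z : EuclideanSpace ℝ (Fin N) => c * (δ - ‖z‖ ^ 2) ^ (-α) - 1)
      ((c * α * (δ - ‖y‖ ^ 2) ^ (-α - 1)) • (2 • innerSL ℝ y)) y := by
  have hq : HasFDerivAt (fun z : EuclideanSpace ℝ (Fin N) => ‖z‖ ^ 2) (2 • innerSL ℝ y) y :=
    (hasStrictFDerivAt_norm_sq y).hasFDerivAt
  exact (aux_deriv1 δ c α (sub_pos.mpr hy)).comp_hasFDerivAt y hq

lemma aux_contDiffAt {y : EuclideanSpace ℝ (Fin N)} (hy : ‖y‖ ^ 2 < δ) :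
    ContDiffAt ℝ 2 (fun z : EuclideanSpace ℝ (Fin N) => c * (δ - ‖z‖ ^ 2) ^ (-α) - 1) y := by
  have h0 : (0:ℝ) < δ - ‖y‖ ^ 2 := sub_pos.mpr hy
  have hq : ContDiffAt ℝ 2 (fun z : EuclideanSpace ℝ (Fin N) => δ - ‖z‖ ^ 2) y :=
    contDiffAt_const.sub (contDiff_norm_sq ℝ).contDiffAt
  have hr : ContDiffAt ℝ 2 (fun t : ℝ => t ^ (-α)) (δ - ‖y‖ ^ 2) :=
    Real.contDiffAt_rpow_const_of_ne h0.ne'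
  exact ((hr.comp y hq).const_smul c).sub contDiffAt_const

lemma aux_lap {x : EuclideanSpace ℝ (Fin N)} (hx : ‖x‖ ^ 2 < δ) :
    laplacian (fun z : EuclideanSpace ℝ (Fin N) => c * (δ - ‖z‖ ^ 2) ^ (-α) - 1) x
      = 2 * N * (c * α * (δ - ‖x‖ ^ 2) ^ (-α - 1))
        + 4 * ‖x‖ ^ 2 * (c * α * (α + 1) * (δ - ‖x‖ ^ 2) ^ (-α - 2)) := by
  classical
  set f : EuclideanSpace ℝ (Fin N) → ℝ := fun z => c * (δ - ‖z‖ ^ 2) ^ (-α) - 1 with hf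
  set U : Set (EuclideanSpace ℝ (Fin N)) := {z | ‖z‖ ^ 2 < δ} with hUdef
  have hU : IsOpen U := isOpen_lt (continuous_norm.pow 2) continuous_const
  have hfd : ∀ y ∈ U, fderiv ℝ f y = (c * α * (δ - ‖y‖ ^ 2) ^ (-α - 1)) • (2 • innerSL ℝ y) :=
    fun y hy => (aux_fderiv1 δ c α hy).fderiv
  have hBdiff : DifferentiableAt ℝ (fderiv ℝ f) x := by
    have h2 : ContDiffAt ℝ 2 f x := aux_contDiffAt δ c α hx
    exact (h2.fderiv_right (m := 1) (by norm_num)).differentiableAt (by norm_num)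
  -- second derivative in direction e i
  have key : ∀ i : Fin N,
      fderiv ℝ (fderiv ℝ f) x (EuclideanSpace.single i 1) (EuclideanSpace.single i 1)
        = 2 * (c * α * (δ - ‖x‖ ^ 2) ^ (-α - 1))
          + 4 * (c * α * (α + 1) * (δ - ‖x‖ ^ 2) ^ (-α - 2)) * (x i) ^ 2 := by
    intro i
    set w : EuclideanSpace ℝ (Fin N) := EuclideanSpace.single i 1 with hw
    have h1 : HasFDerivAt (fun y => fderiv ℝ f y w)
        ((fderiv ℝ f x).comp 0 + (fderiv ℝ (fderiv ℝ f) x).flip w) x :=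
      hBdiff.hasFDerivAt.clm_apply (hasFDerivAt_const w x)
    -- explicit derivative of the same function
    have hc1 : HasFDerivAt (fun y : EuclideanSpace ℝ (Fin N) => c * α * (δ - ‖y‖ ^ 2) ^ (-α - 1))
        ((c * α * (α + 1) * (δ - ‖x‖ ^ 2) ^ (-α - 2)) • (2 • innerSL ℝ x)) x := by
      have := (aux_deriv2 δ c α (sub_pos.mpr hx)).comp_hasFDerivAt x
        (hasStrictFDerivAt_norm_sq x).hasFDerivAt
      exact this
    have hd1 : HasFDerivAt (fun y : EuclideanSpace ℝ (Fin N) => (2:ℝ) * y i)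
        ((2:ℝ) • (EuclideanSpace.proj i : EuclideanSpace ℝ (Fin N) →L[ℝ] ℝ)) x :=
      (EuclideanSpace.proj i : EuclideanSpace ℝ (Fin N) →L[ℝ] ℝ).hasFDerivAt.const_mul 2
    have hg := hc1.mul hd1
    have heq : (fun y => fderiv ℝ f y w)
        =ᶠ[nhds x] (fun y : EuclideanSpace ℝ (Fin N)
          => (c * α * (δ - ‖y‖ ^ 2) ^ (-α - 1)) * ((2:ℝ) * y i)) := by
      filter_upwards [hU.mem_nhds hx] with y hy
      rw [hfd y hy]
      simp [hw, ContinuousLinearMap.smul_apply, real_inner_comm,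
        EuclideanSpace.inner_single_left, EuclideanSpace.inner_single_right]
    have h2 : HasFDerivAt (fun y => fderiv ℝ f y w)
        ((c * α * (δ - ‖x‖ ^ 2) ^ (-α - 1)) • ((2:ℝ) • (EuclideanSpace.proj i : EuclideanSpace ℝ (Fin N) →L[ℝ] ℝ))
          + ((2:ℝ) * x i) • ((c * α * (α + 1) * (δ - ‖x‖ ^ 2) ^ (-α - 2)) • (2 • innerSL ℝ x))) x :=
      hg.congr_of_eventuallyEq heq
    have huniq := h1.unique h2
    have happ := congrArg (fun L : EuclideanSpace ℝ (Fin N) →L[ℝ] ℝ => L w) huniq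
    simp only [ContinuousLinearMap.add_apply, ContinuousLinearMap.comp_zero,
      ContinuousLinearMap.zero_apply, zero_add, ContinuousLinearMap.flip_apply,
      ContinuousLinearMap.smul_apply, smul_eq_mul] at happ
    rw [happ]
    simp [hw, EuclideanSpace.single_apply, real_inner_comm, EuclideanSpace.inner_single_left,
      EuclideanSpace.inner_single_right]
    ring
  have hnorm : ‖x‖ ^ 2 = ∑ i, (x i) ^ 2 := by
    rw [EuclideanSpace.norm_eq, Real.sq_sqrt (by positivity)]
    simp [Real.norm_eq_abs, sq_abs]
  simp only [laplacian, iteratedFDeriv_two_apply, Matrix.cons_val_zero, Matrix.cons_val_one,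
    Matrix.head_cons, key]
  rw [Finset.sum_add_distrib, Finset.sum_const, ← Finset.mul_sum, ← hnorm,
    Finset.card_univ, Fintype.card_fin, nsmul_eq_mul]
  ring

end aux

/-- Example 3.6(i): the explicit solution of `-Δu = λ (u+1)^{(N+2)/(N-2)}` in the unit
ball of `ℝ^N`, `N ≥ 3`, with `-1 < u < 0` in `B₁` and `u = 0` on the unit sphere. -/
theorem stmt_18 {N : ℕ} (hN : 3 ≤ N) (lam : ℝ) (hlam : lam < 0) (δ : ℝ)
    (hδ : δ = ((N:ℝ)^2 - 2*(N:ℝ) - 2*lam +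
      Real.sqrt ((N:ℝ)*((N:ℝ)-2)*((N:ℝ)*((N:ℝ)-2) - 4*lam))) / (-2*lam))
    (u : EuclideanSpace ℝ (Fin N) → ℝ)
    (hu : ∀ x, u x = ((δ - 1)/(δ - ‖x‖^2)) ^ (((N:ℝ)-2)/2) - 1) :
    1 < δ ∧
    (∃ U, IsOpen U ∧ Metric.closedBall (0 : EuclideanSpace ℝ (Fin N)) 1 ⊆ U ∧
      ContDiffOn ℝ 2 u U) ∧
    (∀ x ∈ Metric.ball (0 : EuclideanSpace ℝ (Fin N)) 1,
      (-1 < u x ∧ u x < 0) ∧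
        -laplacian u x = lam * (u x + 1) ^ (((N:ℝ)+2)/((N:ℝ)-2))) ∧
    (∀ x : EuclideanSpace ℝ (Fin N), ‖x‖ = 1 → u x = 0) := by
  have hNR : (3:ℝ) ≤ (N:ℝ) := by exact_mod_cast hN
  have hN2 : (0:ℝ) < (N:ℝ) - 2 := by linarith
  have hl2 : (0:ℝ) < -2*lam := by linarith
  have hrad : (0:ℝ) ≤ (N:ℝ)*((N:ℝ)-2)*((N:ℝ)*((N:ℝ)-2) - 4*lam) := by
    have h1 : (0:ℝ) < (N:ℝ)*((N:ℝ)-2) := by nlinarith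
    nlinarith
  have hS0 : 0 ≤ Real.sqrt ((N:ℝ)*((N:ℝ)-2)*((N:ℝ)*((N:ℝ)-2) - 4*lam)) := Real.sqrt_nonneg _
  have hS2 : (Real.sqrt ((N:ℝ)*((N:ℝ)-2)*((N:ℝ)*((N:ℝ)-2) - 4*lam)))^2
      = (N:ℝ)*((N:ℝ)-2)*((N:ℝ)*((N:ℝ)-2) - 4*lam) := Real.sq_sqrt hrad
  have hδ1 : 1 < δ := by
    rw [hδ, lt_div_iff₀ hl2]; nlinarith
  have hc0 : (0:ℝ) < δ - 1 := by linarith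
  have hδpos : (0:ℝ) < δ := by linarith
  have hkey : lam*(δ-1)^2 + (N:ℝ)*((N:ℝ)-2)*δ = 0 := by
    have hδ' : δ * (-2*lam) = ((N:ℝ)^2 - 2*(N:ℝ) - 2*lam +
        Real.sqrt ((N:ℝ)*((N:ℝ)-2)*((N:ℝ)*((N:ℝ)-2) - 4*lam))) := by
      rw [hδ, div_mul_cancel₀ _ (ne_of_gt hl2)]
    have hSval : Real.sqrt ((N:ℝ)*((N:ℝ)-2)*((N:ℝ)*((N:ℝ)-2) - 4*lam))
        = δ * (-2*lam) - ((N:ℝ)^2 - 2*(N:ℝ) - 2*lam) := by linarith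
    rw [hSval] at hS2
    have h4 : (4*lam) * (lam*(δ-1)^2 + (N:ℝ)*((N:ℝ)-2)*δ) = 0 := by linear_combination hS2
    have := mul_eq_zero.mp h4
    rcases this with h | h
    · exact absurd h (by intro h'; nlinarith)
    · exact h
  -- notation
  set α : ℝ := ((N:ℝ)-2)/2 with hα
  have hα0 : 0 < α := by rw [hα]; linarith
  set c : ℝ := (δ-1) ^ α with hcdef
  set U : Set (EuclideanSpace ℝ (Fin N)) := {z | ‖z‖ ^ 2 < δ} with hUdef
  have hUopen : IsOpen U := isOpen_lt (continuous_norm.pow 2) continuous_const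
  have hball : Metric.closedBall (0 : EuclideanSpace ℝ (Fin N)) 1 ⊆ U := by
    intro z hz
    rw [Metric.mem_closedBall, dist_zero_right] at hz
    have : ‖z‖ ^ 2 ≤ 1 := by nlinarith [norm_nonneg z]
    exact lt_of_le_of_lt this hδ1
  have hformula : ∀ z : EuclideanSpace ℝ (Fin N), z ∈ U →
      u z = c * (δ - ‖z‖ ^ 2) ^ (-α) - 1 := by
    intro z hz
    have h0 : (0:ℝ) < δ - ‖z‖ ^ 2 := sub_pos.mpr hz
    rw [hu z, Real.div_rpow hc0.le h0.le, Real.rpow_neg h0.le, div_eq_mul_inv, ← hcdef]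
  have hev : ∀ x ∈ U, u =ᶠ[𝓝 x]
      (fun z : EuclideanSpace ℝ (Fin N) => c * (δ - ‖z‖ ^ 2) ^ (-α) - 1) := by
    intro x hx
    filter_upwards [hUopen.mem_nhds hx] with y hy
    exact hformula y hy
  refine ⟨hδ1, ⟨U, hUopen, hball, ?_⟩, ?_, ?_⟩
  · intro x hx
    exact ((aux_contDiffAt δ c α hx).congr_of_eventuallyEq (hev x hx)).contDiffWithinAt
  · intro x hx
    rw [Metric.mem_ball, dist_zero_right] at hx
    have hs1 : ‖x‖ ^ 2 < 1 := by nlinarith [norm_nonneg x]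
    have hxU : x ∈ U := lt_trans hs1 hδ1
    have h0 : (0:ℝ) < δ - ‖x‖ ^ 2 := sub_pos.mpr hxU
    have hr0 : (0:ℝ) < (δ-1)/(δ - ‖x‖ ^ 2) := div_pos hc0 h0
    have hr1 : (δ-1)/(δ - ‖x‖ ^ 2) < 1 := (div_lt_one h0).mpr (by linarith)
    constructor
    · constructor
      · have := Real.rpow_pos_of_pos hr0 α
        rw [hu x]; linarith
      · have := Real.rpow_lt_one hr0.le hr1 hα0
        rw [hu x]; linarith
    · -- the PDE
      have hlap : laplacian u x = 2 * N * (c * α * (δ - ‖x‖ ^ 2) ^ (-α - 1))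
          + 4 * ‖x‖ ^ 2 * (c * α * (α + 1) * (δ - ‖x‖ ^ 2) ^ (-α - 2)) := by
        have hcongr : laplacian u x = laplacian
            (fun z : EuclideanSpace ℝ (Fin N) => c * (δ - ‖z‖ ^ 2) ^ (-α) - 1) x := by
          simp only [laplacian, iteratedFDeriv_two_apply, (hev x hxU).fderiv.fderiv_eq]
        rw [hcongr, aux_lap δ c α hxU]
      have hux1 : u x + 1 = ((δ-1)/(δ - ‖x‖ ^ 2)) ^ α := by rw [hu x]; ring
      rw [hlap, hux1, ← Real.rpow_mul hr0.le]
      have hαp : α * (((N:ℝ)+2)/((N:ℝ)-2)) = α + 2 := by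
        rw [hα]; field_simp; ring
      rw [hαp, Real.div_rpow hc0.le h0.le, Real.rpow_add hc0 α 2, Real.rpow_two,
        div_eq_mul_inv, ← Real.rpow_neg h0.le, show -(α+2) = -α-2 by ring,
        show (-α-1 : ℝ) = (-α-2) + 1 by ring, Real.rpow_add h0, Real.rpow_one, ← hcdef]
      have h2α : 2*α = (N:ℝ)-2 := by rw [hα]; ring
      linear_combination (-(c * (δ - ‖x‖ ^ 2) ^ (-α-2))) * hkey +
        (c * (δ - ‖x‖ ^ 2) ^ (-α-2) * (2*α*‖x‖^2 - 2*α*δ - 2*‖x‖^2*α - 2*‖x‖^2)) * h2α -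
        (2 * (N:ℝ) * c * (δ - ‖x‖ ^ 2) ^ (-α-2) * ‖x‖^2) * h2α
  · intro x hx
    rw [hu x, hx]
    rw [show (1:ℝ)^2 = 1 by norm_num, div_self (by linarith : δ - 1 ≠ 0), Real.one_rpow]
    ring
end

section
/- Let λ < 0 and define u : [−1, 1] → ℝ by u(x) := 1 − √( 1 + (−2λ/(1 + √(1 − 4λ))) (1 − x²) ). Then u is twice continuously differentiable on (−1, 1), satisfies −u″(x) = λ/(1 − u(x))³ and u(x) < 0 for every x ∈ (−1, 1), and u(−1) = u(1) = 0. -/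
open Set Filter Topology

/-- Example 4.1(ii): the explicit solution of `-u'' = λ/(1-u)³` on `(-1, 1)` with
`u < 0` inside and `u(±1) = 0`. -/
theorem stmt_19 (lam : ℝ) (hlam : lam < 0) (u : ℝ → ℝ)
    (hu : ∀ x, u x = 1 - Real.sqrt (1 + (-2*lam/(1 + Real.sqrt (1 - 4*lam))) * (1 - x^2))) :
    ContDiffOn ℝ 2 u (Ioo (-1) 1) ∧
    (∀ x ∈ Ioo (-1:ℝ) 1, -deriv (deriv u) x = lam / (1 - u x)^3 ∧ u x < 0) ∧
    u (-1) = 0 ∧ u 1 = 0 := by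
  have h4 : (0:ℝ) < 1 - 4*lam := by linarith
  obtain ⟨s, hs⟩ : ∃ y, y = Real.sqrt (1 - 4*lam) := ⟨_, rfl⟩
  have hs0 : 0 ≤ s := hs ▸ Real.sqrt_nonneg _
  have hs2 : s^2 = 1 - 4*lam := by rw [hs]; exact Real.sq_sqrt h4.le
  have hs1 : 1 < s := by nlinarith
  obtain ⟨c, hcdef⟩ : ∃ y, y = -2*lam/(1+s) := ⟨_, rfl⟩
  have hc : c = (s-1)/2 := by
    rw [hcdef, div_eq_div_iff (by linarith) (by norm_num)]
    nlinarith
  have hcpos : 0 < c := by rw [hc]; linarith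
  have hlamc : lam = -(c*(1+c)) := by rw [hc]; nlinarith
  obtain ⟨g, hgdef⟩ : ∃ G : ℝ → ℝ, G = fun x => 1 + c*(1-x^2) := ⟨_, rfl⟩
  have hgx : ∀ x, g x = 1 + c*(1-x^2) := by intro x; rw [hgdef]
  have hug : ∀ x, u x = 1 - Real.sqrt (g x) := by
    intro x; rw [hu, hgx, ← hs, ← hcdef]
  have huf : u = fun x => 1 - Real.sqrt (g x) := funext hug
  have hgpos : ∀ x ∈ Ioo (-1:ℝ) 1, 1 < g x := by
    intro x hx
    have h1 : 0 < 1 - x^2 := by nlinarith [hx.1, hx.2]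
    rw [hgx]; nlinarith
  have hgd : ∀ x : ℝ, HasDerivAt g (-(2*c*x)) x := by
    intro x
    rw [hgdef]
    have h1 := (((hasDerivAt_pow 2 x).const_sub 1).const_mul c).const_add 1
    convert h1 using 1
    · rfl
    · rfl
    push_cast; ring
  -- first derivative
  have hud : ∀ x : ℝ, 0 < g x → HasDerivAt u (c*x / Real.sqrt (g x)) x := by
    intro x hx
    have hsp : 0 < Real.sqrt (g x) := Real.sqrt_pos.mpr hx
    have h1 := ((hgd x).sqrt hx.ne').const_sub 1
    rw [huf]
    convert h1 using 1
    · rfl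
    · rfl
    field_simp
  -- second derivative
  have hud2 : ∀ x ∈ Ioo (-1:ℝ) 1,
      HasDerivAt (deriv u)
        ((c * Real.sqrt (g x) - c*x * (-(2*c*x) / (2 * Real.sqrt (g x)))) / (Real.sqrt (g x))^2) x := by
    intro x hx
    have hgp : 0 < g x := by linarith [hgpos x hx]
    have hsp : 0 < Real.sqrt (g x) := Real.sqrt_pos.mpr hgp
    have h1 : HasDerivAt (fun y => c*y / Real.sqrt (g y))
        ((c * Real.sqrt (g x) - c*x * (-(2*c*x) / (2 * Real.sqrt (g x)))) / (Real.sqrt (g x))^2) x :=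
      by simpa [Pi.div_def] using ((hasDerivAt_id x).const_mul c).div ((hgd x).sqrt hgp.ne') hsp.ne'
    apply h1.congr_of_eventuallyEq
    have hmem : Ioo (-1:ℝ) 1 ∈ 𝓝 x := isOpen_Ioo.mem_nhds hx
    filter_upwards [hmem] with y hy
    exact (hud y (by linarith [hgpos y hy])).deriv
  refine ⟨?_, ?_, ?_, ?_⟩
  · -- smoothness
    rw [huf]
    intro x hx
    have hgne : g x ≠ 0 := by linarith [hgpos x hx]
    apply ContDiffAt.contDiffWithinAt
    refine contDiffAt_const.sub ((Real.contDiffAt_sqrt hgne).comp x ?_)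
    rw [hgdef]; fun_prop
  · intro x hx
    have hg1 : 1 < g x := hgpos x hx
    have hsp : 0 < Real.sqrt (g x) := Real.sqrt_pos.mpr (by linarith)
    have hs1' : 1 < Real.sqrt (g x) := by nlinarith [Real.sq_sqrt (by linarith : (0:ℝ) ≤ g x), Real.sqrt_nonneg (g x)]
    constructor
    · rw [(hud2 x hx).deriv, hug x]
      have ht2 : (Real.sqrt (g x))^2 = g x := Real.sq_sqrt (by linarith)
      obtain ⟨t, ht⟩ : ∃ t, Real.sqrt (g x) = t := ⟨_, rfl⟩
      rw [ht] at ht2 hsp ⊢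
      have htg : t^2 = 1 + c*(1-x^2) := by rw [ht2, hgx]
      rw [show (1 - (1 - t)) = t by ring, hlamc]
      have htne : t ≠ 0 := hsp.ne'
      field_simp
      ring_nf
      linear_combination (-1) * htg
    · rw [hug x]; linarith
  · rw [hug]; simp [hgx]
  · rw [hug]; simp [hgx]
end
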